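/- arXiv:1801.05593 — 2 statements merged into one kernel-verified Lean document; each statement's English description precedes it below -/
import Mathlib

section
/- Under these assumptions, for every α ∈ [0,1] one has κ_α(τ,σ) ≤ (1−α)·(Ric(τ,σ)/(d_τ∨d_σ) + 2·(1/(d_τ∧d_σ) − 1/(d_τ∨d_σ)) + (d_τ∧d_σ)/(d_τ∨d_σ) − 1); consequently the Lin–Lu–Yau Ricci curvature satisfies κ(τ,σ) ≤ Ric(τ,σ)/(d_τ∨d_σ) + 2·(1/(d_τ∧d_σ) − 1/(d_τ∨d_σ)) + (d_τ∧d_σ)/(d_τ∨d_σ) − 1. -/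
open Finset Filter Topology

noncomputable section

/-- A coupling between two (probability) mass functions `μ` and `ν` on a finite
vertex set: a matrix with values in `[0,1]` whose row sums are `μ` and whose
column sums are `ν`. -/
def IsCoupling {V : Type*} [Fintype V] (A : V → V → ℝ) (μ ν : V → ℝ) : Prop :=
  (∀ x y, 0 ≤ A x y ∧ A x y ≤ 1) ∧
  (∀ x, ∑ y, A x y = μ x) ∧
  (∀ y, ∑ x, A x y = ν y)

/-- The (1-)Wasserstein distance between two mass functions on the vertex set of a
graph, with respect to the graph distance. -/
def Wass {V : Type*} [Fintype V] (G : SimpleGraph V) (μ ν : V → ℝ) : ℝ :=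
  sInf {c | ∃ A : V → V → ℝ, IsCoupling A μ ν ∧
    c = ∑ x, ∑ y, A x y * (G.dist x y : ℝ)}

/-- The probability measure `m_x^α`: mass `α` at `x`, mass `(1-α)/d_x` at each
neighbor of `x`, and `0` elsewhere. -/
def mMeas {V : Type*} [Fintype V] [DecidableEq V] (G : SimpleGraph V)
    [DecidableRel G.Adj] (α : ℝ) (x : V) : V → ℝ :=
  fun z => if z = x then α else if G.Adj x z then (1 - α) / (G.degree x : ℝ) else 0

/-- The `α`-Ricci curvature `κ_α(x,y) = 1 - W(m_x^α, m_y^α)/d(x,y)`. -/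
def kappaAlpha {V : Type*} [Fintype V] [DecidableEq V] (G : SimpleGraph V)
    [DecidableRel G.Adj] (α : ℝ) (x y : V) : ℝ :=
  1 - Wass G (mMeas G α x) (mMeas G α y) / (G.dist x y : ℝ)

/-- The Lin–Lu–Yau Ricci curvature `κ(x,y) = lim_{α→1⁻} κ_α(x,y)/(1-α)`. -/
def kappa {V : Type*} [Fintype V] [DecidableEq V] (G : SimpleGraph V)
    [DecidableRel G.Adj] (x y : V) : ℝ :=
  limUnder (𝓝[<] (1 : ℝ)) (fun α => kappaAlpha G α x y / (1 - α))

/-- The (non-normalized) graph Laplacian `(Δf)(x) = d_x f(x) - ∑_{y ~ x} f(y)`. -/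
def lap {V : Type*} [Fintype V] [DecidableEq V] (G : SimpleGraph V)
    [DecidableRel G.Adj] (f : V → ℝ) (x : V) : ℝ :=
  (G.degree x : ℝ) * f x - ∑ y ∈ G.neighborFinset x, f y

end


section Aux

variable {V : Type*} [Fintype V] [DecidableEq V] {G : SimpleGraph V} [DecidableRel G.Adj]

/-- The cost set defining the Wasserstein distance. -/
def costSet (G : SimpleGraph V) (μ ν : V → ℝ) : Set ℝ :=
  {c | ∃ A : V → V → ℝ, IsCoupling A μ ν ∧
    c = ∑ x, ∑ y, A x y * (G.dist x y : ℝ)}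

lemma wass_eq (μ ν : V → ℝ) : Wass G μ ν = sInf (costSet G μ ν) := rfl

lemma costSet_bddBelow (μ ν : V → ℝ) : BddBelow (costSet G μ ν) := by
  refine ⟨0, ?_⟩
  rintro c ⟨A, ⟨h01, -, -⟩, rfl⟩
  refine Finset.sum_nonneg fun x _ => Finset.sum_nonneg fun y _ => ?_
  exact mul_nonneg (h01 x y).1 (Nat.cast_nonneg _)

lemma sum_mMeas {α : ℝ} {x : V} (hd : 0 < G.degree x) : ∑ z, mMeas G α x z = 1 := by
  have h : ∀ z, mMeas G α x z =
      (if z = x then α else 0) + (if G.Adj x z then (1 - α) / (G.degree x : ℝ) else 0) := by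
    intro z
    by_cases hz : z = x
    · simp [mMeas, hz]
    · simp [mMeas, hz]
  rw [Finset.sum_congr rfl fun z _ => h z, Finset.sum_add_distrib,
    Finset.sum_ite_eq' Finset.univ x (fun _ => α), ← Finset.sum_filter,
    ← SimpleGraph.neighborFinset_eq_filter, Finset.sum_const,
    SimpleGraph.card_neighborFinset_eq_degree]
  have hd' : (G.degree x : ℝ) ≠ 0 := by positivity
  simp only [Finset.mem_univ, if_true, nsmul_eq_mul]
  field_simp
  ring

lemma mMeas_nonneg {α : ℝ} (hα : α ∈ Set.Icc (0:ℝ) 1) (x z : V) : 0 ≤ mMeas G α x z := by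
  unfold mMeas
  split_ifs
  · exact hα.1
  · have : (0:ℝ) ≤ 1 - α := by linarith [hα.2]
    positivity
  · exact le_refl 0

lemma mMeas_le_one {α : ℝ} (hα : α ∈ Set.Icc (0:ℝ) 1) {x : V} (hd : 0 < G.degree x) (z : V) :
    mMeas G α x z ≤ 1 := by
  unfold mMeas
  have h1 : (1:ℝ) ≤ (G.degree x : ℝ) := by exact_mod_cast hd
  split_ifs
  · exact hα.2
  · rw [div_le_one (by linarith)]
    linarith [hα.1]
  · norm_num

lemma costSet_nonempty {μ ν : V → ℝ}
    (hμ0 : ∀ z, 0 ≤ μ z) (hμ1 : ∀ z, μ z ≤ 1) (hμs : ∑ z, μ z = 1)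
    (hν0 : ∀ z, 0 ≤ ν z) (hν1 : ∀ z, ν z ≤ 1) (hνs : ∑ z, ν z = 1) :
    (costSet G μ ν).Nonempty := by
  refine ⟨_, fun x y => μ x * ν y, ⟨?_, ?_, ?_⟩, rfl⟩
  · intro x y
    constructor
    · exact mul_nonneg (hμ0 x) (hν0 y)
    · calc μ x * ν y ≤ 1 * 1 := mul_le_mul (hμ1 x) (hν1 y) (hν0 y) zero_le_one
      _ = 1 := by ring
  · intro x; rw [← Finset.mul_sum, hνs, mul_one]
  · intro y; rw [← Finset.sum_mul, hμs, one_mul]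

/-- One-sided Kantorovich duality: a Lipschitz-type function gives a lower
bound on the Wasserstein distance. -/
lemma wass_ge {μ ν : V → ℝ} (hne : (costSet G μ ν).Nonempty) {f : V → ℝ}
    (hf : ∀ x y, f x - f y ≤ (G.dist x y : ℝ)) :
    (∑ x, f x * μ x) - (∑ x, f x * ν x) ≤ Wass G μ ν := by
  rw [wass_eq]
  refine le_csInf hne ?_
  rintro c ⟨A, ⟨h01, hrow, hcol⟩, rfl⟩
  have key : ∀ x y, A x y * f x - A x y * f y ≤ A x y * (G.dist x y : ℝ) := by
    intro x y
    have := mul_le_mul_of_nonneg_left (hf x y) (h01 x y).1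
    linarith [this]
  calc (∑ x, f x * μ x) - (∑ x, f x * ν x)
      = (∑ x, ∑ y, A x y * f x) - (∑ y, ∑ x, A x y * f y) := by
        congr 1
        · refine Finset.sum_congr rfl fun x _ => ?_
          rw [mul_comm, ← hrow x, Finset.sum_mul]
        · refine Finset.sum_congr rfl fun y _ => ?_
          rw [mul_comm, ← hcol y, Finset.sum_mul]
    _ = ∑ x, ∑ y, (A x y * f x - A x y * f y) := by
        rw [Finset.sum_comm (f := fun y x => A x y * f y)]
        rw [← Finset.sum_sub_distrib]
        refine Finset.sum_congr rfl fun x _ => ?_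
        rw [← Finset.sum_sub_distrib]
    _ ≤ ∑ x, ∑ y, A x y * (G.dist x y : ℝ) :=
        Finset.sum_le_sum fun x _ => Finset.sum_le_sum fun y _ => key x y

lemma wass_comm (μ ν : V → ℝ) : Wass G μ ν = Wass G ν μ := by
  have hset : ∀ μ' ν' : V → ℝ, costSet G μ' ν' ⊆ costSet G ν' μ' := by
    rintro μ' ν' c ⟨A, ⟨h01, hrow, hcol⟩, rfl⟩
    refine ⟨fun x y => A y x, ⟨fun x y => h01 y x, hcol, hrow⟩, ?_⟩
    rw [Finset.sum_comm]
    refine Finset.sum_congr rfl fun x _ => Finset.sum_congr rfl fun y _ => ?_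
    rw [SimpleGraph.dist_comm]
  rw [wass_eq, wass_eq]
  congr 1
  exact le_antisymm (hset μ ν) (hset ν μ)

lemma sum_mul_mMeas (f : V → ℝ) (α : ℝ) (x : V) :
    ∑ z, f z * mMeas G α x z
      = α * f x + ((1 - α) / (G.degree x : ℝ)) * ∑ y ∈ G.neighborFinset x, f y := by
  have h : ∀ z, f z * mMeas G α x z =
      (if z = x then α * f z else 0)
        + (if G.Adj x z then ((1 - α) / (G.degree x : ℝ)) * f z else 0) := by
    intro z
    by_cases hz : z = x
    · subst hz; simp [mMeas, G.irrefl, mul_comm]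
    · simp only [mMeas, hz, if_false, if_neg hz]
      split_ifs <;> ring
  rw [Finset.sum_congr rfl fun z _ => h z, Finset.sum_add_distrib,
    Finset.sum_ite_eq' Finset.univ x (fun z => α * f z), ← Finset.sum_filter,
    ← SimpleGraph.neighborFinset_eq_filter, ← Finset.mul_sum]
  simp

end Aux


section Key

variable {V : Type*} [Fintype V] [DecidableEq V] {G : SimpleGraph V} [DecidableRel G.Adj]

lemma key_wass_lb (hconn : G.Connected) (a b : V) (hadj : G.Adj a b)
    (Sa Ta Sb Tb : Finset V)
    (hNa : G.neighborFinset a = insert b (Sa ∪ Ta))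
    (hNb : G.neighborFinset b = insert a (Sb ∪ Tb))
    (hbA : b ∉ Sa ∪ Ta) (haB : a ∉ Sb ∪ Tb) (hbB : b ∉ Sb ∪ Tb)
    (hdA : Disjoint Sa Ta) (hdB : Disjoint Sb Tb)
    (hm : Ta.card = Tb.card)
    (hnadjb : ∀ x ∈ Sa ∪ Ta, ¬ G.Adj x b)
    (hnadja : ∀ x ∈ Sb ∪ Tb, ¬ G.Adj x a)
    (hdist : ∀ x ∈ Sa ∪ Ta, ∀ s ∈ Sb, 3 ≤ G.dist x s)
    {α : ℝ} (hα : α ∈ Set.Icc (0:ℝ) 1) :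
    1 - (1 - α) * (2 / (G.degree a : ℝ) - 2 * (Sb.card : ℝ) / (G.degree b : ℝ))
      ≤ Wass G (mMeas G α a) (mMeas G α b) := by
  classical
  -- basic distance facts
  have hdist_ge2 : ∀ x y : V, x ≠ y → ¬ G.Adj x y → 2 ≤ G.dist x y := by
    intro x y hxy hnadj
    have h0 : G.dist x y ≠ 0 := (hconn.pos_dist_of_ne hxy).ne'
    have h1 : G.dist x y ≠ 1 := fun h => hnadj (SimpleGraph.dist_eq_one_iff_adj.mp h)
    omega
  -- the dual potential
  set anch : Finset V := insert b Sb with hanch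
  have hanchne : anch.Nonempty := Finset.insert_nonempty _ _
  set c : V → ℝ := fun s => if s = b then 0 else -1 with hc
  set f : V → ℝ := fun y => min (anch.inf' hanchne (fun s => (G.dist y s : ℝ) + c s)) 2
    with hfdef
  -- one-sided Lipschitz property
  have hf : ∀ x y, f x - f y ≤ (G.dist x y : ℝ) := by
    intro x y
    rw [sub_le_iff_le_add]
    have h2 : f x ≤ 2 := min_le_right _ _
    have hxle : ∀ s ∈ anch, f x ≤ (G.dist x y : ℝ) + ((G.dist y s : ℝ) + c s) := by
      intro s hs
      refine le_trans (min_le_left _ _) (le_trans (Finset.inf'_le _ hs) ?_)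
      have := hconn.dist_triangle (u := x) (v := y) (w := s)
      have : (G.dist x s : ℝ) ≤ (G.dist x y : ℝ) + (G.dist y s : ℝ) := by exact_mod_cast this
      linarith
    rcases le_total (anch.inf' hanchne (fun s => (G.dist y s : ℝ) + c s)) 2 with h | h
    · have : f y = anch.inf' hanchne (fun s => (G.dist y s : ℝ) + c s) := min_eq_left h
      rw [this]
      rw [← sub_le_iff_le_add']
      refine Finset.le_inf' hanchne _ ?_
      intro s hs
      have := hxle s hs
      linarith
    · have hy : f y = 2 := min_eq_right h
      rw [hy]
      have : (0:ℝ) ≤ (G.dist x y : ℝ) := Nat.cast_nonneg _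
      linarith
  -- values of f
  have hfb : f b = 0 := by
    have hub : f b ≤ 0 := by
      refine le_trans (min_le_left _ _) (le_trans (Finset.inf'_le _ (Finset.mem_insert_self b Sb)) ?_)
      simp [hc, SimpleGraph.dist_self]
    have hlb : 0 ≤ f b := by
      refine le_min (Finset.le_inf' hanchne _ ?_) (by norm_num)
      intro s hs
      rcases Finset.mem_insert.mp hs with rfl | hs
      · simp [hc, SimpleGraph.dist_self]
      · have hne : b ≠ s := fun h => hbB (Finset.mem_union_left _ (h ▸ hs))
        have : 1 ≤ G.dist b s := hconn.pos_dist_of_ne hne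
        have : (1:ℝ) ≤ (G.dist b s : ℝ) := by exact_mod_cast this
        have hsb : s ≠ b := fun h => hbB (Finset.mem_union_left _ (h ▸ hs))
        simp only [hc, if_neg hsb]
        linarith
    linarith
  have hfa : f a = 1 := by
    have hub : f a ≤ 1 := by
      refine le_trans (min_le_left _ _) (le_trans (Finset.inf'_le _ (Finset.mem_insert_self b Sb)) ?_)
      have : G.dist a b = 1 := SimpleGraph.dist_eq_one_iff_adj.mpr hadj
      simp [hc, this]
    have hlb : 1 ≤ f a := by
      refine le_min (Finset.le_inf' hanchne _ ?_) (by norm_num)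
      intro s hs
      rcases Finset.mem_insert.mp hs with rfl | hs
      · have : G.dist a s = 1 := SimpleGraph.dist_eq_one_iff_adj.mpr hadj
        simp [hc, this]
      · have hne : a ≠ s := fun h => haB (Finset.mem_union_left _ (h ▸ hs))
        have hnadj : ¬ G.Adj a s := fun h => hnadja s (Finset.mem_union_left _ hs) h.symm
        have h2 : 2 ≤ G.dist a s := hdist_ge2 a s hne hnadj
        have h2' : (2:ℝ) ≤ (G.dist a s : ℝ) := by exact_mod_cast h2
        have hsb : s ≠ b := fun h => hbB (Finset.mem_union_left _ (h ▸ hs))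
        simp only [hc, if_neg hsb]
        linarith
    linarith
  have hfSaTa : ∀ x ∈ Sa ∪ Ta, 2 ≤ f x := by
    intro x hx
    refine le_min (Finset.le_inf' hanchne _ ?_) (le_refl 2)
    intro s hs
    rcases Finset.mem_insert.mp hs with rfl | hs
    · have hne : x ≠ s := fun h => hbA (h ▸ hx)
      have h2 : 2 ≤ G.dist x s := hdist_ge2 x s hne (hnadjb x hx)
      have h2' : (2:ℝ) ≤ (G.dist x s : ℝ) := by exact_mod_cast h2
      simp [hc]
      linarith
    · have h3 : 3 ≤ G.dist x s := hdist x hx s hs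
      have h3' : (3:ℝ) ≤ (G.dist x s : ℝ) := by exact_mod_cast h3
      have hsb : s ≠ b := fun h => hbB (Finset.mem_union_left _ (h ▸ hs))
      simp only [hc, if_neg hsb]
      linarith
  have hfSb : ∀ s ∈ Sb, f s ≤ -1 := by
    intro s hs
    refine le_trans (min_le_left _ _)
      (le_trans (Finset.inf'_le _ (Finset.mem_insert_of_mem hs)) ?_)
    have hsb : s ≠ b := fun h => hbB (Finset.mem_union_left _ (h ▸ hs))
    simp [hc, if_neg hsb, SimpleGraph.dist_self]
  have hfTb : ∀ y ∈ Tb, f y ≤ 1 := by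
    intro y hy
    refine le_trans (min_le_left _ _)
      (le_trans (Finset.inf'_le _ (Finset.mem_insert_self b Sb)) ?_)
    have hadjy : G.Adj b y := by
      rw [← SimpleGraph.mem_neighborFinset, hNb]
      exact Finset.mem_insert_of_mem (Finset.mem_union_right _ hy)
    have : G.dist y b = 1 := SimpleGraph.dist_eq_one_iff_adj.mpr hadjy.symm
    simp [hc, this]
  -- degrees
  have hda : G.degree a = 1 + Sa.card + Ta.card := by
    rw [← SimpleGraph.card_neighborFinset_eq_degree, hNa,
      Finset.card_insert_of_notMem hbA, Finset.card_union_of_disjoint hdA]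
    ring
  have hdb : G.degree b = 1 + Sb.card + Tb.card := by
    rw [← SimpleGraph.card_neighborFinset_eq_degree, hNb,
      Finset.card_insert_of_notMem haB, Finset.card_union_of_disjoint hdB]
    ring
  have hdapos : 0 < G.degree a := by omega
  have hdbpos : 0 < G.degree b := by omega
  -- nonemptiness of the coupling cost set
  have hne : (costSet G (mMeas G α a) (mMeas G α b)).Nonempty :=
    costSet_nonempty (mMeas_nonneg hα a) (mMeas_le_one hα hdapos) (sum_mMeas hdapos)
      (mMeas_nonneg hα b) (mMeas_le_one hα hdbpos) (sum_mMeas hdbpos)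
  -- the Kantorovich lower bound
  have hW := wass_ge (G := G) hne hf
  rw [sum_mul_mMeas, sum_mul_mMeas, hNa, hNb,
    Finset.sum_insert hbA, Finset.sum_insert haB,
    Finset.sum_union hdA, Finset.sum_union hdB, hfa, hfb] at hW
  -- bound the neighbor sums
  have h1a : (1 - α) ≥ 0 := by linarith [hα.2]
  have hSa : (2 * Sa.card : ℝ) ≤ ∑ x ∈ Sa, f x := by
    have := Finset.card_nsmul_le_sum Sa f 2 (fun x hx => hfSaTa x (Finset.mem_union_left _ hx))
    simpa [nsmul_eq_mul, mul_comm] using this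
  have hTa : (2 * Ta.card : ℝ) ≤ ∑ x ∈ Ta, f x := by
    have := Finset.card_nsmul_le_sum Ta f 2 (fun x hx => hfSaTa x (Finset.mem_union_right _ hx))
    simpa [nsmul_eq_mul, mul_comm] using this
  have hSb' : (∑ x ∈ Sb, f x) ≤ -Sb.card := by
    have := Finset.sum_le_card_nsmul Sb f (-1) hfSb
    simpa [nsmul_eq_mul, mul_comm] using this
  have hTb' : (∑ x ∈ Tb, f x) ≤ Tb.card := by
    have := Finset.sum_le_card_nsmul Tb f 1 hfTb
    simpa using this
  have hcoefa : (0:ℝ) ≤ (1 - α) / (G.degree a : ℝ) := by positivity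
  have hcoefb : (0:ℝ) ≤ (1 - α) / (G.degree b : ℝ) := by positivity
  -- put it together
  have hstep : α * 1 + ((1 - α) / (G.degree a : ℝ)) * (0 + (2 * Sa.card + 2 * Ta.card))
      - (α * 0 + ((1 - α) / (G.degree b : ℝ)) * (1 + ((-Sb.card) + Tb.card)))
      ≤ Wass G (mMeas G α a) (mMeas G α b) := by
    refine le_trans ?_ hW
    have hA := mul_le_mul_of_nonneg_left (by linarith [hSa, hTa] :
      (0:ℝ) + (2 * Sa.card + 2 * Ta.card) ≤ 0 + ((∑ x ∈ Sa, f x) + ∑ x ∈ Ta, f x)) hcoefa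
    have hB := mul_le_mul_of_nonneg_left (by linarith [hSb', hTb'] :
      (1:ℝ) + ((∑ x ∈ Sb, f x) + ∑ x ∈ Tb, f x) ≤ 1 + ((-Sb.card) + Tb.card)) hcoefb
    linarith
  refine le_trans (le_of_eq ?_) hstep
  -- final algebra
  have hdaR : (G.degree a : ℝ) = 1 + Sa.card + Ta.card := by exact_mod_cast hda
  have hdbR : (G.degree b : ℝ) = 1 + Sb.card + Tb.card := by exact_mod_cast hdb
  have hTm : (Ta.card : ℝ) = (Tb.card : ℝ) := by exact_mod_cast hm
  have hda0 : (G.degree a : ℝ) ≠ 0 := by positivity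
  have hdb0 : (G.degree b : ℝ) ≠ 0 := by positivity
  field_simp
  rw [hdaR, hdbR, hTm]
  ring

end Key


section Mono

variable {V : Type*} [Fintype V] [DecidableEq V] {G : SimpleGraph V} [DecidableRel G.Adj]

lemma wass_convex_step (x y : V) (hxy : G.Adj x y)
    (hdx : 0 < G.degree x) (hdy : 0 < G.degree y)
    {α β : ℝ} (h0 : 0 ≤ α) (hab : α ≤ β) (hb : β < 1) :
    Wass G (mMeas G β x) (mMeas G β y)
      ≤ ((1 - β) / (1 - α)) * Wass G (mMeas G α x) (mMeas G α y) + (1 - (1 - β) / (1 - α)) := by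
  have h1a : (0:ℝ) < 1 - α := by linarith
  have h1b : (0:ℝ) < 1 - β := by linarith
  set c : ℝ := (1 - β) / (1 - α) with hcdef
  have hcpos : 0 < c := div_pos h1b h1a
  have hc1 : c ≤ 1 := by
    rw [hcdef, div_le_one h1a]; linarith
  have hcmul : c * (1 - α) = 1 - β := div_mul_cancel₀ _ (ne_of_gt h1a)
  have hαIcc : α ∈ Set.Icc (0:ℝ) 1 := ⟨h0, by linarith⟩
  have hneα : (costSet G (mMeas G α x) (mMeas G α y)).Nonempty :=
    costSet_nonempty (mMeas_nonneg hαIcc x) (mMeas_le_one hαIcc hdx) (sum_mMeas hdx)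
      (mMeas_nonneg hαIcc y) (mMeas_le_one hαIcc hdy) (sum_mMeas hdy)
  have hdxy : G.dist x y = 1 := SimpleGraph.dist_eq_one_iff_adj.mpr hxy
  have hkey : ∀ t ∈ costSet G (mMeas G α x) (mMeas G α y),
      Wass G (mMeas G β x) (mMeas G β y) ≤ c * t + (1 - c) := by
    rintro t ⟨A, ⟨h01, hrow, hcol⟩, rfl⟩
    have hmem : c * (∑ u, ∑ v, A u v * (G.dist u v : ℝ)) + (1 - c)
        ∈ costSet G (mMeas G β x) (mMeas G β y) := by
      refine ⟨fun u v => c * A u v + (1 - c) * (if u = x ∧ v = y then 1 else 0), ⟨?_, ?_, ?_⟩, ?_⟩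
      · intro u v
        dsimp only
        constructor
        · have := (h01 u v).1
          have : 0 ≤ c * A u v := mul_nonneg hcpos.le (h01 u v).1
          split_ifs <;> nlinarith [hc1]
        · have hA1 := (h01 u v).2
          have : c * A u v ≤ c := by nlinarith [(h01 u v).1]
          split_ifs <;> nlinarith [hc1]
      · intro u
        have hind : ∑ v, (if u = x ∧ v = y then (1:ℝ) else 0) = if u = x then 1 else 0 := by
          by_cases hu : u = x
          · simp [hu, Finset.sum_ite_eq']
          · simp [hu]
        rw [Finset.sum_add_distrib, ← Finset.mul_sum, hrow, ← Finset.mul_sum, hind]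
        unfold mMeas
        by_cases hu : u = x
        · subst hu
          simp only [if_pos rfl, ↓reduceIte]
          rw [hcdef]; field_simp; ring
        · simp only [if_neg hu]
          split_ifs with h
          · rw [hcdef]; field_simp; ring
          · ring
      · intro v
        have hind : ∑ u, (if u = x ∧ v = y then (1:ℝ) else 0) = if v = y then 1 else 0 := by
          by_cases hv : v = y
          · simp [hv, Finset.sum_ite_eq']
          · simp [hv]
        rw [Finset.sum_add_distrib, ← Finset.mul_sum, hcol, ← Finset.mul_sum, hind]
        unfold mMeas
        by_cases hv : v = y
        · subst hv
          simp only [if_pos rfl, ↓reduceIte]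
          rw [hcdef]; field_simp; ring
        · simp only [if_neg hv]
          split_ifs with h
          · rw [hcdef]; field_simp; ring
          · ring
      · have expand : ∑ u, ∑ v, (c * A u v + (1 - c) * (if u = x ∧ v = y then 1 else 0))
            * (G.dist u v : ℝ)
            = c * (∑ u, ∑ v, A u v * (G.dist u v : ℝ))
              + (1 - c) * (∑ u, ∑ v, (if u = x ∧ v = y then (1:ℝ) else 0) * (G.dist u v : ℝ)) := by
          rw [Finset.mul_sum, Finset.mul_sum, ← Finset.sum_add_distrib]
          refine Finset.sum_congr rfl fun u _ => ?_
          rw [Finset.mul_sum, Finset.mul_sum, ← Finset.sum_add_distrib]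
          refine Finset.sum_congr rfl fun v _ => ?_
          ring
        have hindsum : ∑ u, ∑ v, (if u = x ∧ v = y then (1:ℝ) else 0) * (G.dist u v : ℝ)
            = (G.dist x y : ℝ) := by
          rw [Finset.sum_eq_single x]
          · rw [Finset.sum_eq_single y]
            · simp
            · intro v _ hv; simp [hv]
            · intro h; exact absurd (Finset.mem_univ y) h
          · intro u _ hu; simp [hu]
          · intro h; exact absurd (Finset.mem_univ x) h
        rw [expand, hindsum, hdxy]
        norm_num
    exact csInf_le (costSet_bddBelow _ _) hmem
  have h2 : (Wass G (mMeas G β x) (mMeas G β y) - (1 - c)) / c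
      ≤ Wass G (mMeas G α x) (mMeas G α y) := by
    rw [wass_eq (μ := mMeas G α x)]
    refine le_csInf hneα fun t ht => ?_
    rw [div_le_iff₀ hcpos]
    have := hkey t ht
    nlinarith
  rw [div_le_iff₀ hcpos] at h2
  nlinarith

lemma ratio_mono (x y : V) (hxy : G.Adj x y)
    (hdx : 0 < G.degree x) (hdy : 0 < G.degree y)
    {α β : ℝ} (h0 : 0 ≤ α) (hab : α ≤ β) (hb : β < 1) :
    kappaAlpha G α x y / (1 - α) ≤ kappaAlpha G β x y / (1 - β) := by
  have h1a : (0:ℝ) < 1 - α := by linarith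
  have h1b : (0:ℝ) < 1 - β := by linarith
  have hdxy : G.dist x y = 1 := SimpleGraph.dist_eq_one_iff_adj.mpr hxy
  have hk : ∀ γ : ℝ, kappaAlpha G γ x y = 1 - Wass G (mMeas G γ x) (mMeas G γ y) := by
    intro γ
    rw [kappaAlpha, hdxy]
    norm_num
  rw [hk, hk, div_le_div_iff₀ h1a h1b]
  have hWb := wass_convex_step x y hxy hdx hdy h0 hab hb
  have H := mul_le_mul_of_nonneg_right hWb h1a.le
  have e1 : ((1 - β) / (1 - α) * Wass G (mMeas G α x) (mMeas G α y)
      + (1 - (1 - β) / (1 - α))) * (1 - α)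
      = (1 - β) * Wass G (mMeas G α x) (mMeas G α y) + (1 - α) - (1 - β) := by
    field_simp
    ring
  rw [e1] at H
  nlinarith [H]

end Mono

set_option maxHeartbeats 1000000 in
theorem stmt3
    {V : Type*} [Fintype V] [DecidableEq V]
    (G : SimpleGraph V) [DecidableRel G.Adj]
    (hconn : G.Connected) (hcard : 1 < Fintype.card V)
    (τ σ : V) (hadj : G.Adj τ σ)
    (Sτ Tτ Sσ Tσ : Finset V) (φ : V → V)
    (hNτ : G.neighborFinset τ = insert σ (Sτ ∪ Tτ))
    (hNσ : G.neighborFinset σ = insert τ (Sσ ∪ Tσ))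
    (hσnot : σ ∉ Sτ ∪ Tτ) (hτnot : τ ∉ Sσ ∪ Tσ)
    (hdisjτ : Disjoint Sτ Tτ) (hdisjσ : Disjoint Sσ Tσ)
    (hφ : Set.BijOn φ ↑Tτ ↑Tσ)
    (hφadj : ∀ t ∈ Tτ, G.Adj t (φ t))
    (hd1 : Disjoint Sτ Sσ) (hd2 : Disjoint Sτ Tσ)
    (hd3 : Disjoint Tτ Sσ) (hd4 : Disjoint Tτ Tσ)
    (hτd : τ ∉ Sτ ∪ Tτ) (hσd : σ ∉ Sσ ∪ Tσ)
    (hnadjσ : ∀ x ∈ Sτ ∪ Tτ, ¬ G.Adj x σ)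
    (hnadjτ : ∀ x ∈ Sσ ∪ Tσ, ¬ G.Adj x τ)
    (hdist1 : ∀ x ∈ Sτ ∪ Tτ, ∀ y ∈ Sσ, 3 ≤ G.dist x y)
    (hdist2 : ∀ x ∈ Sτ, ∀ y ∈ Tσ, 3 ≤ G.dist x y) :
    (∀ α : ℝ, α ∈ Set.Icc (0 : ℝ) 1 →
      kappaAlpha G α τ σ ≤ (1 - α) * (((2 : ℝ) - (Sτ.card : ℝ) - (Sσ.card : ℝ)) / max (G.degree τ : ℝ) (G.degree σ : ℝ)
      + 2 * (1 / min (G.degree τ : ℝ) (G.degree σ : ℝ)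
              - 1 / max (G.degree τ : ℝ) (G.degree σ : ℝ))
      + min (G.degree τ : ℝ) (G.degree σ : ℝ) / max (G.degree τ : ℝ) (G.degree σ : ℝ) - 1)) ∧
    kappa G τ σ ≤ (((2 : ℝ) - (Sτ.card : ℝ) - (Sσ.card : ℝ)) / max (G.degree τ : ℝ) (G.degree σ : ℝ)
      + 2 * (1 / min (G.degree τ : ℝ) (G.degree σ : ℝ)
              - 1 / max (G.degree τ : ℝ) (G.degree σ : ℝ))
      + min (G.degree τ : ℝ) (G.degree σ : ℝ) / max (G.degree τ : ℝ) (G.degree σ : ℝ) - 1) := by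
  classical
  -- cardinality of the matched sets
  have himg : Finset.image φ Tτ = Tσ := by
    apply Finset.coe_injective
    rw [Finset.coe_image]
    exact hφ.image_eq
  have hmcard : Tτ.card = Tσ.card := by
    rw [← himg, Finset.card_image_of_injOn hφ.injOn]
  -- degrees
  have hdτ : G.degree τ = 1 + Sτ.card + Tτ.card := by
    rw [← SimpleGraph.card_neighborFinset_eq_degree, hNτ,
      Finset.card_insert_of_notMem hσnot, Finset.card_union_of_disjoint hdisjτ]
    ring
  have hdσ : G.degree σ = 1 + Sσ.card + Tσ.card := by
    rw [← SimpleGraph.card_neighborFinset_eq_degree, hNσ,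
      Finset.card_insert_of_notMem hτnot, Finset.card_union_of_disjoint hdisjσ]
    ring
  have hdτpos : 0 < G.degree τ := by omega
  have hdσpos : 0 < G.degree σ := by omega
  have hdτR : (G.degree τ : ℝ) = 1 + (Sτ.card : ℝ) + (Tτ.card : ℝ) := by exact_mod_cast hdτ
  have hdσR : (G.degree σ : ℝ) = 1 + (Sσ.card : ℝ) + (Tσ.card : ℝ) := by exact_mod_cast hdσ
  have hTm : (Tτ.card : ℝ) = (Tσ.card : ℝ) := by exact_mod_cast hmcard
  have hdist1' : G.dist τ σ = 1 := SimpleGraph.dist_eq_one_iff_adj.mpr hadj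
  have hk : ∀ γ : ℝ, kappaAlpha G γ τ σ = 1 - Wass G (mMeas G γ τ) (mMeas G γ σ) := by
    intro γ
    rw [kappaAlpha, hdist1']
    norm_num
  -- swapped distance hypothesis
  have hdistsw : ∀ x ∈ Sσ ∪ Tσ, ∀ s ∈ Sτ, 3 ≤ G.dist x s := by
    intro x hx s hs
    rw [SimpleGraph.dist_comm]
    rcases Finset.mem_union.mp hx with hx | hx
    · exact hdist1 s (Finset.mem_union_left _ hs) x hx
    · exact hdist2 s hs x hx
  -- the two key lower bounds on the Wasserstein distance
  have key1 : ∀ α : ℝ, α ∈ Set.Icc (0:ℝ) 1 →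
      1 - (1 - α) * (2 / (G.degree τ : ℝ) - 2 * (Sσ.card : ℝ) / (G.degree σ : ℝ))
        ≤ Wass G (mMeas G α τ) (mMeas G α σ) := fun α hα =>
    key_wass_lb hconn τ σ hadj Sτ Tτ Sσ Tσ hNτ hNσ hσnot hτnot hσd hdisjτ hdisjσ
      hmcard hnadjσ hnadjτ hdist1 hα
  have key2 : ∀ α : ℝ, α ∈ Set.Icc (0:ℝ) 1 →
      1 - (1 - α) * (2 / (G.degree σ : ℝ) - 2 * (Sτ.card : ℝ) / (G.degree τ : ℝ))
        ≤ Wass G (mMeas G α τ) (mMeas G α σ) := by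
    intro α hα
    rw [wass_comm]
    exact key_wass_lb hconn σ τ hadj.symm Sσ Tσ Sτ Tτ hNσ hNτ hτnot hσnot hτd hdisjσ hdisjτ
      hmcard.symm hnadjτ hnadjσ hdistsw hα
  -- part 1
  have part1 : ∀ α : ℝ, α ∈ Set.Icc (0 : ℝ) 1 →
      kappaAlpha G α τ σ ≤ (1 - α) * (((2 : ℝ) - (Sτ.card : ℝ) - (Sσ.card : ℝ)) / max (G.degree τ : ℝ) (G.degree σ : ℝ)
      + 2 * (1 / min (G.degree τ : ℝ) (G.degree σ : ℝ)
              - 1 / max (G.degree τ : ℝ) (G.degree σ : ℝ))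
      + min (G.degree τ : ℝ) (G.degree σ : ℝ) / max (G.degree τ : ℝ) (G.degree σ : ℝ) - 1) := by
    intro α hα
    have q1 : (1 + (Sτ.card : ℝ) + (Tσ.card : ℝ)) ≠ 0 := by positivity
    have q2 : (1 + (Sσ.card : ℝ) + (Tσ.card : ℝ)) ≠ 0 := by positivity
    rcases le_total (G.degree τ : ℝ) (G.degree σ : ℝ) with hle | hle
    · rw [max_eq_right hle, min_eq_left hle, hk α]
      have hCeq : ((2 : ℝ) - (Sτ.card : ℝ) - (Sσ.card : ℝ)) / (G.degree σ : ℝ)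
          + 2 * (1 / (G.degree τ : ℝ) - 1 / (G.degree σ : ℝ))
          + (G.degree τ : ℝ) / (G.degree σ : ℝ) - 1
          = 2 / (G.degree τ : ℝ) - 2 * (Sσ.card : ℝ) / (G.degree σ : ℝ) := by
        rw [hdτR, hdσR, hTm]
        field_simp [q1, q2]
        ring
      rw [hCeq]
      linarith [key1 α hα]
    · rw [max_eq_left hle, min_eq_right hle, hk α]
      have hCeq : ((2 : ℝ) - (Sτ.card : ℝ) - (Sσ.card : ℝ)) / (G.degree τ : ℝ)
          + 2 * (1 / (G.degree σ : ℝ) - 1 / (G.degree τ : ℝ))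
          + (G.degree σ : ℝ) / (G.degree τ : ℝ) - 1
          = 2 / (G.degree σ : ℝ) - 2 * (Sτ.card : ℝ) / (G.degree τ : ℝ) := by
        rw [hdτR, hdσR, hTm]
        field_simp [q1, q2]
        ring
      rw [hCeq]
      linarith [key2 α hα]
  refine ⟨part1, ?_⟩
  -- part 2
  set C : ℝ := ((2 : ℝ) - (Sτ.card : ℝ) - (Sσ.card : ℝ)) / max (G.degree τ : ℝ) (G.degree σ : ℝ)
      + 2 * (1 / min (G.degree τ : ℝ) (G.degree σ : ℝ)
              - 1 / max (G.degree τ : ℝ) (G.degree σ : ℝ))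
      + min (G.degree τ : ℝ) (G.degree σ : ℝ) / max (G.degree τ : ℝ) (G.degree σ : ℝ) - 1
    with hCdef
  have hC : ∀ γ : ℝ, 0 ≤ γ → γ < 1 → kappaAlpha G γ τ σ / (1 - γ) ≤ C := by
    intro γ h0 h1
    have hpos : (0:ℝ) < 1 - γ := by linarith
    rw [div_le_iff₀ hpos]
    have := part1 γ ⟨h0, h1.le⟩
    linarith [this]
  set h' : ℝ → ℝ := fun γ => kappaAlpha G (max γ (1/2)) τ σ / (1 - max γ (1/2)) with hh'
  have hmono : MonotoneOn h' (Set.Iio (1:ℝ)) := by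
    intro a ha b hb hab
    simp only [hh']
    exact ratio_mono τ σ hadj hdτpos hdσpos
      (le_trans (by norm_num) (le_max_right a (1/2)))
      (max_le_max hab (le_refl _))
      (max_lt hb (by norm_num))
  have hbdd : BddAbove (h' '' Set.Iio (1:ℝ)) := by
    refine ⟨C, ?_⟩
    rintro _ ⟨γ, hγ, rfl⟩
    exact hC _ (le_trans (by norm_num) (le_max_right γ (1/2)))
      (max_lt hγ (by norm_num))
  have htend' := hmono.tendsto_nhdsLT hbdd
  have heq : h' =ᶠ[𝓝[<] (1:ℝ)] (fun γ => kappaAlpha G γ τ σ / (1 - γ)) := by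
    filter_upwards [Ioo_mem_nhdsLT (by norm_num : (1/2 : ℝ) < 1)] with γ hγ
    simp only [hh', max_eq_left hγ.1.le]
  have htend : Filter.Tendsto (fun γ => kappaAlpha G γ τ σ / (1 - γ)) (𝓝[<] (1:ℝ))
      (𝓝 (sSup (h' '' Set.Iio (1:ℝ)))) := htend'.congr' heq
  have hlim : kappa G τ σ = sSup (h' '' Set.Iio (1:ℝ)) := by
    rw [kappa]
    exact htend.limUnder_eq
  rw [hlim]
  refine csSup_le ⟨h' 0, ⟨0, by norm_num, rfl⟩⟩ ?_
  rintro _ ⟨γ, hγ, rfl⟩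
  exact hC _ (le_trans (by norm_num) (le_max_right γ (1/2))) (max_lt hγ (by norm_num))
end

section
/- For every pair of distinct vertices x, y of G, the function α ↦ κ_α(x,y) is concave on [0,1]: for all α₀, α₁ ∈ [0,1] and all t ∈ [0,1], κ_{tα₀+(1−t)α₁}(x,y) ≥ t·κ_{α₀}(x,y) + (1−t)·κ_{α₁}(x,y). -/
open Finset Filter Topology

section Aux

variable {V : Type*} [Fintype V] [DecidableEq V] {G : SimpleGraph V} [DecidableRel G.Adj]

lemma aux_degree_pos (hconn : G.Connected) (hcard : 1 < Fintype.card V) (x : V) :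
    0 < G.degree x := by
  rw [G.degree_pos_iff_exists_adj]
  obtain ⟨z, hz⟩ := Fintype.exists_ne_of_one_lt_card hcard x
  obtain ⟨w⟩ := hconn.preconnected x z
  exact ⟨w.getVert 1, w.adj_snd (w.not_nil_of_ne hz.symm)⟩

lemma aux_mMeas_mem {α : ℝ} (hα : α ∈ Set.Icc (0:ℝ) 1) (hd : 0 < G.degree x) (z : V) :
    mMeas G α x z ∈ Set.Icc (0:ℝ) 1 := by
  have hd' : (1:ℝ) ≤ (G.degree x : ℝ) := by exact_mod_cast hd
  unfold mMeas
  split_ifs with h1 h2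
  · exact hα
  · constructor
    · apply div_nonneg (by linarith [hα.2]) (by linarith)
    · rw [div_le_one (by linarith)]
      linarith [hα.1]
  · exact ⟨le_refl 0, zero_le_one⟩

lemma aux_mMeas_sum {α : ℝ} (hd : 0 < G.degree x) :
    ∑ z, mMeas G α x z = 1 := by
  have hd' : (G.degree x : ℝ) ≠ 0 := by positivity
  have hsplit : ∀ z, mMeas G α x z =
      (if z = x then α else 0) + (if G.Adj x z then (1 - α) / (G.degree x : ℝ) else 0) := by
    intro z
    unfold mMeas
    by_cases h1 : z = x
    · subst h1; simp [G.irrefl]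
    · simp [h1]
  rw [Finset.sum_congr rfl (fun z _ => hsplit z), Finset.sum_add_distrib]
  rw [Finset.sum_ite_eq' Finset.univ x (fun _ => α)]
  have : ∑ z, (if G.Adj x z then (1 - α) / (G.degree x : ℝ) else 0)
      = (G.degree x : ℝ) * ((1 - α) / (G.degree x : ℝ)) := by
    rw [Finset.sum_ite, Finset.sum_const_zero, Finset.sum_const, add_zero]
    rw [nsmul_eq_mul]
    congr 1
    rw [← SimpleGraph.neighborFinset_eq_filter, SimpleGraph.degree]
  rw [this]
  field_simp
  rw [if_pos (Finset.mem_univ x)]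
  ring

/-- The coupling set of a pair of probability measures is nonempty (product coupling). -/
lemma aux_coupling_exists {μ ν : V → ℝ}
    (hμ : ∀ z, μ z ∈ Set.Icc (0:ℝ) 1) (hν : ∀ z, ν z ∈ Set.Icc (0:ℝ) 1)
    (hμs : ∑ z, μ z = 1) (hνs : ∑ z, ν z = 1) :
    ∃ A : V → V → ℝ, IsCoupling A μ ν := by
  refine ⟨fun a b => μ a * ν b, ⟨fun a b => ?_, fun a => ?_, fun b => ?_⟩⟩
  · constructor
    · exact mul_nonneg (hμ a).1 (hν b).1
    · exact mul_le_one₀ (hμ a).2 (hν b).1 (hν b).2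
  · rw [← Finset.mul_sum, hνs, mul_one]
  · rw [← Finset.sum_mul, hμs, one_mul]

lemma aux_wass_set_nonempty {μ ν : V → ℝ}
    (hμ : ∀ z, μ z ∈ Set.Icc (0:ℝ) 1) (hν : ∀ z, ν z ∈ Set.Icc (0:ℝ) 1)
    (hμs : ∑ z, μ z = 1) (hνs : ∑ z, ν z = 1) :
    {c | ∃ A : V → V → ℝ, IsCoupling A μ ν ∧
      c = ∑ x, ∑ y, A x y * (G.dist x y : ℝ)}.Nonempty := by
  obtain ⟨A, hA⟩ := aux_coupling_exists hμ hν hμs hνs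
  exact ⟨_, A, hA, rfl⟩

lemma aux_wass_set_bddBelow {μ ν : V → ℝ} :
    BddBelow {c | ∃ A : V → V → ℝ, IsCoupling A μ ν ∧
      c = ∑ x, ∑ y, A x y * (G.dist x y : ℝ)} := by
  refine ⟨0, fun c hc => ?_⟩
  obtain ⟨A, hA, rfl⟩ := hc
  apply Finset.sum_nonneg
  intro a _
  apply Finset.sum_nonneg
  intro b _
  exact mul_nonneg (hA.1 a b).1 (Nat.cast_nonneg _)

lemma aux_mMeas_affine {α₀ α₁ t : ℝ} (x : V) :
    mMeas G (t * α₀ + (1 - t) * α₁) x =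
      fun z => t * mMeas G α₀ x z + (1 - t) * mMeas G α₁ x z := by
  funext z
  unfold mMeas
  split_ifs with h1 h2
  · ring
  · field_simp
    ring
  · ring

end Aux

theorem stmt9 {V : Type*} [Fintype V] [DecidableEq V]
    (G : SimpleGraph V) [DecidableRel G.Adj]
    (hconn : G.Connected) (hcard : 1 < Fintype.card V)
    (x y : V) (hxy : x ≠ y)
    (α₀ α₁ t : ℝ) (hα₀ : α₀ ∈ Set.Icc (0 : ℝ) 1) (hα₁ : α₁ ∈ Set.Icc (0 : ℝ) 1)
    (ht : t ∈ Set.Icc (0 : ℝ) 1) :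
    t * kappaAlpha G α₀ x y + (1 - t) * kappaAlpha G α₁ x y ≤
      kappaAlpha G (t * α₀ + (1 - t) * α₁) x y := by
  have hdx := aux_degree_pos hconn hcard x
  have hdy := aux_degree_pos hconn hcard y
  set αc := t * α₀ + (1 - t) * α₁ with hαc
  have hαcm : αc ∈ Set.Icc (0:ℝ) 1 := by
    constructor
    · have := mul_nonneg ht.1 hα₀.1
      have := mul_nonneg (by linarith [ht.2] : (0:ℝ) ≤ 1 - t) hα₁.1
      linarith
    · nlinarith [ht.1, ht.2, hα₀.1, hα₀.2, hα₁.1, hα₁.2]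
  -- sets
  set S : ℝ → Set ℝ := fun α => {c | ∃ A : V → V → ℝ,
      IsCoupling A (mMeas G α x) (mMeas G α y) ∧
      c = ∑ a, ∑ b, A a b * (G.dist a b : ℝ)} with hS
  have hne : ∀ α ∈ Set.Icc (0:ℝ) 1, (S α).Nonempty := fun α hα =>
    aux_wass_set_nonempty (fun z => aux_mMeas_mem hα hdx z)
      (fun z => aux_mMeas_mem hα hdy z) (aux_mMeas_sum hdx) (aux_mMeas_sum hdy)
  have hbdd : ∀ α, BddBelow (S α) := fun α => aux_wass_set_bddBelow
  -- key: combination of couplings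
  have hkey : ∀ c₀ ∈ S α₀, ∀ c₁ ∈ S α₁, t * c₀ + (1 - t) * c₁ ∈ S αc := by
    rintro c₀ ⟨A₀, hA₀, rfl⟩ c₁ ⟨A₁, hA₁, rfl⟩
    refine ⟨fun a b => t * A₀ a b + (1 - t) * A₁ a b, ⟨fun a b => ?_, fun a => ?_, fun b => ?_⟩, ?_⟩
    · constructor
      · show (0:ℝ) ≤ t * A₀ a b + (1 - t) * A₁ a b
        have := mul_nonneg ht.1 (hA₀.1 a b).1
        have := mul_nonneg (by linarith [ht.2] : (0:ℝ) ≤ 1 - t) (hA₁.1 a b).1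
        linarith
      · show t * A₀ a b + (1 - t) * A₁ a b ≤ 1
        nlinarith [ht.1, ht.2, (hA₀.1 a b).1, (hA₀.1 a b).2, (hA₁.1 a b).1, (hA₁.1 a b).2]
    · rw [Finset.sum_add_distrib, ← Finset.mul_sum, ← Finset.mul_sum,
        hA₀.2.1 a, hA₁.2.1 a, aux_mMeas_affine x]
    · rw [Finset.sum_add_distrib, ← Finset.mul_sum, ← Finset.mul_sum,
        hA₀.2.2 b, hA₁.2.2 b, aux_mMeas_affine y]
    · rw [Finset.mul_sum, Finset.mul_sum, ← Finset.sum_add_distrib]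
      refine Finset.sum_congr rfl fun a _ => ?_
      rw [Finset.mul_sum, Finset.mul_sum, ← Finset.sum_add_distrib]
      refine Finset.sum_congr rfl fun b _ => ?_
      ring
  -- Wasserstein convexity
  have hW : Wass G (mMeas G αc x) (mMeas G αc y) ≤
      t * Wass G (mMeas G α₀ x) (mMeas G α₀ y) +
        (1 - t) * Wass G (mMeas G α₁ x) (mMeas G α₁ y) := by
    have hW0 : Wass G (mMeas G α₀ x) (mMeas G α₀ y) = sInf (S α₀) := rfl
    have hW1 : Wass G (mMeas G α₁ x) (mMeas G α₁ y) = sInf (S α₁) := rfl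
    have hWc : Wass G (mMeas G αc x) (mMeas G αc y) = sInf (S αc) := rfl
    rw [hW0, hW1, hWc]
    apply le_of_forall_pos_le_add
    intro ε hε
    obtain ⟨c₀, hc₀, hc₀lt⟩ := Real.lt_sInf_add_pos (hne α₀ hα₀) hε
    obtain ⟨c₁, hc₁, hc₁lt⟩ := Real.lt_sInf_add_pos (hne α₁ hα₁) hε
    have h1 : sInf (S αc) ≤ t * c₀ + (1 - t) * c₁ :=
      csInf_le (hbdd αc) (hkey c₀ hc₀ c₁ hc₁)
    nlinarith [ht.1, ht.2]
  -- conclude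
  have hdist : (0:ℝ) < (G.dist x y : ℝ) := by
    exact_mod_cast hconn.pos_dist_of_ne hxy
  unfold kappaAlpha
  have : t * (1 - Wass G (mMeas G α₀ x) (mMeas G α₀ y) / (G.dist x y : ℝ)) +
      (1 - t) * (1 - Wass G (mMeas G α₁ x) (mMeas G α₁ y) / (G.dist x y : ℝ)) =
      1 - (t * Wass G (mMeas G α₀ x) (mMeas G α₀ y) +
        (1 - t) * Wass G (mMeas G α₁ x) (mMeas G α₁ y)) / (G.dist x y : ℝ) := by
    field_simp
    ring
  rw [this]
  have h2 : Wass G (mMeas G αc x) (mMeas G αc y) / (G.dist x y : ℝ) ≤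
      (t * Wass G (mMeas G α₀ x) (mMeas G α₀ y) +
        (1 - t) * Wass G (mMeas G α₁ x) (mMeas G α₁ y)) / (G.dist x y : ℝ) :=
    div_le_div_of_nonneg_right hW hdist.le
  linarith
end
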